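/- arXiv:2105.11991 — 10 statements merged into one kernel-verified Lean document; each statement's English description precedes it below -/
import Mathlib

section
/- For all lists bk and σ' over an alphabet A and every natural number n, the following are equivalent: (i) there exists a list σ such that σ' ⊑ σ, bk ⊑ σ, and |σ| ≤ |σ'| + n; (ii) there exists a list c such that c ⊑ bk, c ⊑ σ', and |c| + n ≥ |bk|. (Consequently, an anonymized instance with trace σ' belongs to the matching set for background knowledge bk and anonymization parameter n if and only if bk and σ' have a common subsequence of length at least |bk| − n.) -/
/-- Shortest common supersequence bound: if `c` is a common subsequence of `a` and `b`,
there is a common supersequence `s` with `|s| + |c| ≤ |a| + |b|`. -/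
lemma exists_common_supersequence {A : Type*} :
    ∀ (a b c : List A), c.Sublist a → c.Sublist b →
      ∃ s : List A, a.Sublist s ∧ b.Sublist s ∧ s.length + c.length ≤ a.length + b.length
  | _, b, _, .slnil, _ => ⟨b, b.nil_sublist, List.Sublist.refl b, by simp⟩
  | _, b, c, .cons (l₂ := a') x h, hb =>
      let ⟨s, hs1, hs2, hs3⟩ := exists_common_supersequence a' b c h hb
      ⟨x :: s, hs1.cons₂ x, hs2.cons x, by simp only [List.length_cons]; omega⟩
  | _, _, _, .cons₂ (l₁ := c') (l₂ := a') x h, .cons (l₂ := b') y h2 =>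
      let ⟨s, hs1, hs2, hs3⟩ :=
        exists_common_supersequence (x :: a') b' (x :: c') (h.cons₂ x) h2
      ⟨y :: s, hs1.cons y, hs2.cons₂ y, by
        simp only [List.length_cons] at hs3 ⊢; omega⟩
  | _, _, _, .cons₂ (l₁ := c') (l₂ := a') x h, .cons₂ (l₂ := b') _ h2 =>
      let ⟨s, hs1, hs2, hs3⟩ := exists_common_supersequence a' b' c' h h2
      ⟨x :: s, hs1.cons₂ x, hs2.cons₂ x, by
        simp only [List.length_cons] at hs3 ⊢; omega⟩
  termination_by a b => a.length + b.length

/-- Longest common subsequence bound: if `a` and `b` are both sublists of `s`,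
they have a common subsequence `c` with `|a| + |b| ≤ |c| + |s|`. -/
lemma exists_common_subsequence {A : Type*} :
    ∀ (s a b : List A), a.Sublist s → b.Sublist s →
      ∃ c : List A, c.Sublist a ∧ c.Sublist b ∧ a.length + b.length ≤ c.length + s.length
  | _, _, b, .slnil, hb => ⟨[], List.Sublist.refl _, b.nil_sublist, by
      simpa using hb.length_le⟩
  | _, _, _, .cons (l₂ := s') x ha, hb => by
      rcases hb with _ | ⟨_, hb⟩ | ⟨_, hb⟩
      · obtain ⟨c, h1, h2, h3⟩ := exists_common_subsequence s' _ _ ha hb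
        exact ⟨c, h1, h2, by simp only [List.length_cons]; omega⟩
      · obtain ⟨c, h1, h2, h3⟩ := exists_common_subsequence s' _ _ ha hb
        exact ⟨c, h1, h2.cons x, by simp only [List.length_cons]; omega⟩
  | _, _, _, .cons₂ (l₂ := s') x ha, hb => by
      rcases hb with _ | ⟨_, hb⟩ | ⟨_, hb⟩
      · obtain ⟨c, h1, h2, h3⟩ := exists_common_subsequence s' _ _ ha hb
        exact ⟨c, h1.cons x, h2, by simp only [List.length_cons]; omega⟩
      · obtain ⟨c, h1, h2, h3⟩ := exists_common_subsequence s' _ _ ha hb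
        exact ⟨x :: c, h1.cons₂ x, h2.cons₂ x, by
          simp only [List.length_cons]; omega⟩

/-- Theorem 1 (Elements of matching sets): an anonymized trace σ' matches background
knowledge `bk` w.r.t. anonymization parameter `n` (i.e., some specialization of σ'
obtained by adding at most `n` activities contains `bk`) iff `bk` and `σ'` have a
common subsequence of length at least `|bk| - n`. -/
theorem matching_set_iff_common_subsequence {A : Type*} (bk σ' : List A) (n : ℕ) :
    (∃ σ : List A, σ'.Sublist σ ∧ bk.Sublist σ ∧ σ.length ≤ σ'.length + n) ↔
      (∃ c : List A, c.Sublist bk ∧ c.Sublist σ' ∧ bk.length ≤ c.length + n) := by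
  constructor
  · rintro ⟨σ, h1, h2, h3⟩
    obtain ⟨c, hc1, hc2, hc3⟩ := exists_common_subsequence σ bk σ' h2 h1
    exact ⟨c, hc1, hc2, by omega⟩
  · rintro ⟨c, h1, h2, h3⟩
    obtain ⟨s, hs1, hs2, hs3⟩ := exists_common_supersequence σ' bk c h2 h1
    exact ⟨s, hs1, hs2, by omega⟩
end

section
/- If lists σ1 and σ2 over an alphabet A are both subsequences of a list τ, then there exists a list c that is a common subsequence of σ1 and σ2 with |c| + |τ| ≥ |σ1| + |σ2|. -/
/-- If σ1 and σ2 are both subsequences of τ, then they have a common subsequence c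
with |c| + |τ| ≥ |σ1| + |σ2|. -/
theorem common_subsequence_of_common_supersequence {A : Type*} (σ1 σ2 τ : List A)
    (h1 : σ1.Sublist τ) (h2 : σ2.Sublist τ) :
    ∃ c : List A, c.Sublist σ1 ∧ c.Sublist σ2 ∧
      σ1.length + σ2.length ≤ c.length + τ.length := by
  induction τ generalizing σ1 σ2 with
  | nil =>
    exact ⟨[], by simpa using h1 ▸ List.Sublist.refl _,
      by simp [List.sublist_nil.mp h2], by simp [List.sublist_nil.mp h1, List.sublist_nil.mp h2]⟩
  | cons a t ih =>
    cases h1 with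
    | cons _ h1' =>
      cases h2 with
      | cons _ h2' =>
        obtain ⟨c, hc1, hc2, hl⟩ := ih σ1 σ2 h1' h2'
        exact ⟨c, hc1, hc2, by simp; omega⟩
      | cons_cons _ h2' =>
        obtain ⟨c, hc1, hc2, hl⟩ := ih σ1 _ h1' h2'
        exact ⟨c, hc1, hc2.cons a, by simp at hl ⊢; omega⟩
    | cons_cons _ h1' =>
      cases h2 with
      | cons _ h2' =>
        obtain ⟨c, hc1, hc2, hl⟩ := ih _ σ2 h1' h2'
        exact ⟨c, hc1.cons a, hc2, by simp at hl ⊢; omega⟩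
      | cons_cons _ h2' =>
        obtain ⟨c, hc1, hc2, hl⟩ := ih _ _ h1' h2'
        exact ⟨a :: c, hc1.cons₂ a, hc2.cons₂ a, by simp at hl ⊢; omega⟩
end

section
/- If c is a common subsequence of lists σ1 and σ2 over an alphabet A, then there exists a common supersequence τ of σ1 and σ2 with |τ| + |c| ≤ |σ1| + |σ2|. -/
private lemma cons_sublist_decomp {A : Type*} {a : A} {l σ : List A}
    (h : (a :: l).Sublist σ) : ∃ p s, σ = p ++ a :: s ∧ l.Sublist s := by
  rw [List.cons_sublist_iff] at h
  obtain ⟨r₁, r₂, rfl, ha, hl⟩ := h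
  obtain ⟨p, q, rfl⟩ := List.append_of_mem ha
  exact ⟨p, q ++ r₂, by simp, hl.trans (List.sublist_append_right q r₂)⟩

/-- If c is a common subsequence of σ1 and σ2, then there is a common supersequence τ
of σ1 and σ2 with |τ| + |c| ≤ |σ1| + |σ2|. -/
theorem common_supersequence_of_common_subsequence {A : Type*} (c σ1 σ2 : List A)
    (h1 : c.Sublist σ1) (h2 : c.Sublist σ2) :
    ∃ τ : List A, σ1.Sublist τ ∧ σ2.Sublist τ ∧
      τ.length + c.length ≤ σ1.length + σ2.length := by
  induction c generalizing σ1 σ2 with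
  | nil =>
      exact ⟨σ1 ++ σ2, List.sublist_append_left _ _, List.sublist_append_right _ _, by simp⟩
  | cons x c ih =>
      obtain ⟨p1, s1, rfl, hs1⟩ := cons_sublist_decomp h1
      obtain ⟨p2, s2, rfl, hs2⟩ := cons_sublist_decomp h2
      obtain ⟨τ, ht1, ht2, hlen⟩ := ih s1 s2 hs1 hs2
      refine ⟨p1 ++ p2 ++ x :: τ, ?_, ?_, ?_⟩
      · have : (p1 ++ x :: s1).Sublist (p1 ++ (p2 ++ x :: τ)) :=
          (List.Sublist.refl p1).append
            (((List.cons_sublist_cons.mpr ht1)).trans (List.sublist_append_right p2 _))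
        simpa using this
      · have : (p2 ++ x :: s2).Sublist ((p1 ++ p2) ++ x :: τ) :=
          ((List.sublist_append_right p1 p2)).append (List.cons_sublist_cons.mpr ht2)
        simpa using this
      · simp only [List.length_append, List.length_cons]
        omega
end

section
/- For all lists σ1 and σ2 over an alphabet A and every natural number m, the following are equivalent: (i) there exists a list τ such that σ2 ⊑ τ, σ1 is a prefix of τ, and |τ| ≤ |σ2| + m; (ii) there exists a list c such that c ⊑ σ1, c is a prefix of σ2, and |c| + m ≥ |σ1|. (This makes precise the prefix case of the comparability test: σ1 can be made a prefix of σ2 by adding at most m activities to σ2 iff σ1 and σ2 have a common subsequence of length at least |σ1| − m that is a prefix of σ2.) -/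
lemma key_prefix_subseq {A : Type*} {σ2 τ : List A} (h : σ2.Sublist τ) :
    ∀ σ1 : List A, σ1 <+: τ →
      ∃ c : List A, c.Sublist σ1 ∧ c <+: σ2 ∧
        σ1.length + σ2.length ≤ τ.length + c.length := by
  induction h with
  | slnil =>
    intro σ1 hp
    exact ⟨[], by simp [List.prefix_nil.mp hp], List.nil_prefix, by
      simp [List.prefix_nil.mp hp]⟩
  | @cons l₁ l₂ a h ih =>
    intro σ1 hp
    cases σ1 with
    | nil =>
      exact ⟨[], List.nil_sublist _, List.nil_prefix, by
        simpa using h.length_le.trans (Nat.le_succ _)⟩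
    | cons x σ1' =>
      obtain ⟨hx, hp'⟩ := List.cons_prefix_cons.mp hp
      obtain ⟨c, hc1, hc2, hc3⟩ := ih σ1' hp'
      exact ⟨c, hc1.cons _, hc2, by simp; omega⟩
  | @cons_cons l₁ l₂ a h ih =>
    intro σ1 hp
    cases σ1 with
    | nil =>
      exact ⟨[], List.nil_sublist _, List.nil_prefix, by
        simpa using Nat.succ_le_succ h.length_le⟩
    | cons x σ1' =>
      obtain ⟨hx, hp'⟩ := List.cons_prefix_cons.mp hp
      obtain ⟨c, hc1, hc2, hc3⟩ := ih σ1' hp'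
      subst hx
      exact ⟨x :: c, hc1.cons₂ _, List.cons_prefix_cons.mpr ⟨rfl, hc2⟩, by
        simp; omega⟩

/-- Prefix case of the comparability test: σ1 can be made a prefix of σ2 by adding at
most m activities to σ2 iff σ1 and σ2 have a common subsequence of length at least
|σ1| - m that is a prefix of σ2. -/
theorem prefix_comparability_iff {A : Type*} (σ1 σ2 : List A) (m : ℕ) :
    (∃ τ : List A, σ2.Sublist τ ∧ σ1 <+: τ ∧ τ.length ≤ σ2.length + m) ↔
      (∃ c : List A, c.Sublist σ1 ∧ c <+: σ2 ∧ σ1.length ≤ c.length + m) := by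
  constructor
  · rintro ⟨τ, hsub, hpre, hlen⟩
    obtain ⟨c, hc1, hc2, hc3⟩ := key_prefix_subseq hsub σ1 hpre
    exact ⟨c, hc1, hc2, by omega⟩
  · rintro ⟨c, hc1, hc2, hc3⟩
    obtain ⟨ρ, hρ⟩ := hc2
    refine ⟨σ1 ++ ρ, ?_, ⟨ρ, rfl⟩, ?_⟩
    · rw [← hρ]; exact hc1.append (List.Sublist.refl ρ)
    · have := hc1.length_le
      have h2 : σ2.length = c.length + ρ.length := by rw [← hρ]; simp
      simp; omega
end

section
/- Let F1 be an anonymization of a log L1 onto L1' and F2 an anonymization of a log L2 onto L2', both w.r.t. parameter n, and let h be a continuation map from L1 to L2. Let bk be a list over A and s0 ∈ S, and set g1'(s0) = {q ∈ ms(L1', n, bk) | sens(q) = s0} and g2'(s0) = {q ∈ ms(L2', n, bk) | sens(q) = s0}. Then for every p ∈ L1 with bk ⊑ trace(p) and sens(p) = s0, one has F1(p) ∈ g1'(s0) and F2(h(p)) ∈ g2'(s0); moreover the map p ↦ F2(h(p)) is injective on {p ∈ L1 | bk ⊑ trace(p) ∧ sens(p) = s0}. -/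
/-- A simple process instance: a case identifier, a trace (list of activities),
and a sensitive attribute value. -/
structure Instance (C A S : Type*) where
  caseId : C
  trace : List A
  sens : S

variable {C A S : Type*}

/-- A simple event log: a finite set of instances with pairwise distinct case ids. -/
def IsLog (L : Set (Instance C A S)) : Prop :=
  L.Finite ∧ Set.InjOn Instance.caseId L

/-- The matching set of an anonymized log `L'` for background knowledge `bk` and
anonymization parameter `n`. -/
def ms (L' : Set (Instance C A S)) (n : ℕ) (bk : List A) : Set (Instance C A S) :=
  {p' ∈ L' | ∃ σ : List A, p'.trace.Sublist σ ∧ σ.length ≤ p'.trace.length + n ∧ bk.Sublist σ}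

/-- `F` is an anonymization of the log `L` onto the log `L'` w.r.t. parameter `n`. -/
def IsAnon (n : ℕ) (F : Instance C A S → Instance C A S)
    (L L' : Set (Instance C A S)) : Prop :=
  Set.BijOn F L L' ∧
    ∀ p ∈ L, (F p).trace.Sublist p.trace ∧
      p.trace.length ≤ (F p).trace.length + n ∧ (F p).sens = p.sens

/-- `h` is a continuation map from the log `L1` to the later log `L2`. -/
def IsCont (h : Instance C A S → Instance C A S)
    (L1 L2 : Set (Instance C A S)) : Prop :=
  Set.InjOn h L1 ∧ Set.MapsTo h L1 L2 ∧
    ∀ p ∈ L1, p.trace <+: (h p).trace ∧ (h p).sens = p.sens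

/-- Instances `q1` and `q2` are comparable w.r.t. the anonymization parameter `n`. -/
def Comparable (n : ℕ) (q1 q2 : Instance C A S) : Prop :=
  q1.sens = q2.sens ∧ ∃ τ1 τ2 : List A,
    q1.trace.Sublist τ1 ∧ τ1.length ≤ q1.trace.length + n ∧
    q2.trace.Sublist τ2 ∧ τ2.length ≤ q2.trace.length + n ∧
    τ1 <+: τ2

/-- Cases of `L1` matching the background knowledge and sensitive value `s0` have their
anonymizations in the groups `g1'(s0)` and `g2'(s0)` of both matching sets, and the map
`p ↦ F2 (h p)` is injective on such cases. -/
theorem group_membership_and_injectivity (n : ℕ)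
    (F1 F2 h : Instance C A S → Instance C A S)
    (L1 L1' L2 L2' : Set (Instance C A S))
    (hL1 : IsLog L1) (hL1' : IsLog L1') (hL2 : IsLog L2) (hL2' : IsLog L2')
    (hF1 : IsAnon n F1 L1 L1') (hF2 : IsAnon n F2 L2 L2')
    (hh : IsCont h L1 L2) (bk : List A) (s0 : S) :
    (∀ p ∈ L1, bk.Sublist p.trace → p.sens = s0 →
        F1 p ∈ {q ∈ ms L1' n bk | q.sens = s0} ∧
        F2 (h p) ∈ {q ∈ ms L2' n bk | q.sens = s0}) ∧
      Set.InjOn (fun p => F2 (h p)) {p ∈ L1 | bk.Sublist p.trace ∧ p.sens = s0} := by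
  obtain ⟨hF1bij, hF1p⟩ := hF1
  obtain ⟨hF2bij, hF2p⟩ := hF2
  obtain ⟨hinj, hmaps, hcont⟩ := hh
  constructor
  · intro p hp hbk hs
    obtain ⟨h1, h2, h3⟩ := hF1p p hp
    have hp2 : h p ∈ L2 := hmaps hp
    obtain ⟨hpre, hsens2⟩ := hcont p hp
    obtain ⟨h1', h2', h3'⟩ := hF2p (h p) hp2
    have hbk2 : bk.Sublist (h p).trace := hbk.trans hpre.sublist
    refine ⟨⟨⟨hF1bij.mapsTo hp, p.trace, h1, h2, hbk⟩, h3.trans hs⟩,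
      ⟨⟨hF2bij.mapsTo hp2, (h p).trace, h1', h2', hbk2⟩, h3'.trans (hsens2.trans hs)⟩⟩
  · intro p hp q hq heq
    exact hinj hp.1 hq.1 (hF2bij.injOn (hmaps hp.1) (hmaps hq.1) heq)
end

section
/- (F-attack crack size, per group.) Let F1 be an anonymization of a log L1 onto L1' and F2 an anonymization of a log L2 onto L2', both w.r.t. parameter n, let h be a continuation map from L1 to L2, let bk be a list over A and s0 ∈ S, and set g1'(s0) = {q ∈ ms(L1', n, bk) | sens(q) = s0} and g2'(s0) = {q ∈ ms(L2', n, bk) | sens(q) = s0}. Then the number of instances p ∈ L1 with bk ⊑ trace(p) and sens(p) = s0 is at most min(|g1'(s0)|, |g2'(s0)|). Consequently, at least |g1'(s0)| − min(|g1'(s0)|, |g2'(s0)|) instances of the group g1'(s0) are anonymizations of cases of L1 whose trace does not contain bk as a subsequence. -/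
variable {C A S : Type*}

/-- F-attack crack size, per group: the number of cases of `L1` matching the background
knowledge `bk` with sensitive value `s0` is at most `min |g1'(s0)| |g2'(s0)|`; hence at
least `|g1'(s0)| - min |g1'(s0)| |g2'(s0)|` instances of the group `g1'(s0)` are
anonymizations of cases of `L1` whose trace does not contain `bk`. -/
theorem f_attack_crack_size (n : ℕ)
    (F1 F2 h : Instance C A S → Instance C A S)
    (L1 L1' L2 L2' : Set (Instance C A S))
    (hL1 : IsLog L1) (hL1' : IsLog L1') (hL2 : IsLog L2) (hL2' : IsLog L2')
    (hF1 : IsAnon n F1 L1 L1') (hF2 : IsAnon n F2 L2 L2')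
    (hh : IsCont h L1 L2) (bk : List A) (s0 : S) :
    ({p ∈ L1 | bk.Sublist p.trace ∧ p.sens = s0}).ncard ≤
        min ({q ∈ ms L1' n bk | q.sens = s0}).ncard
          ({q ∈ ms L2' n bk | q.sens = s0}).ncard ∧
      ({q ∈ ms L1' n bk | q.sens = s0}).ncard -
          min ({q ∈ ms L1' n bk | q.sens = s0}).ncard
            ({q ∈ ms L2' n bk | q.sens = s0}).ncard ≤
        ({q ∈ ms L1' n bk | q.sens = s0 ∧
            ∃ p ∈ L1, F1 p = q ∧ ¬ bk.Sublist p.trace}).ncard := by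
  obtain ⟨hL1fin, -⟩ := hL1
  obtain ⟨hL1'fin, -⟩ := hL1'
  obtain ⟨hL2'fin, -⟩ := hL2'
  obtain ⟨hF1bij, hF1prop⟩ := hF1
  obtain ⟨hF2bij, hF2prop⟩ := hF2
  obtain ⟨hhinj, hhmaps, hhprop⟩ := hh
  set X := {p ∈ L1 | bk.Sublist p.trace ∧ p.sens = s0} with hXdef
  set G1 := {q ∈ ms L1' n bk | q.sens = s0} with hG1def
  set G2 := {q ∈ ms L2' n bk | q.sens = s0} with hG2def
  set B := {q ∈ ms L1' n bk | q.sens = s0 ∧ ∃ p ∈ L1, F1 p = q ∧ ¬ bk.Sublist p.trace}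
    with hBdef
  have hG1fin : G1.Finite := hL1'fin.subset (fun q hq => hq.1.1)
  have hG2fin : G2.Finite := hL2'fin.subset (fun q hq => hq.1.1)
  have hXfin : X.Finite := hL1fin.subset (fun p hp => hp.1)
  have hBfin : B.Finite := hL1'fin.subset (fun q hq => hq.1.1)
  have h1 : X.ncard ≤ G1.ncard := by
    have := hG1fin.to_subtype
    apply Set.ncard_le_ncard_of_injOn F1
    · rintro p ⟨hpL, hbk, hs⟩
      obtain ⟨hsub, hlen, hsens⟩ := hF1prop p hpL
      exact ⟨⟨hF1bij.mapsTo hpL, ⟨p.trace, hsub, hlen, hbk⟩⟩, hsens.trans hs⟩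
    · exact hF1bij.injOn.mono (fun p hp => hp.1)
  have h2 : X.ncard ≤ G2.ncard := by
    have := hG2fin.to_subtype
    apply Set.ncard_le_ncard_of_injOn (fun p => F2 (h p))
    · rintro p ⟨hpL, hbk, hs⟩
      obtain ⟨hpre, hsens2⟩ := hhprop p hpL
      obtain ⟨hsub, hlen, hsens⟩ := hF2prop (h p) (hhmaps hpL)
      exact ⟨⟨hF2bij.mapsTo (hhmaps hpL), ⟨(h p).trace, hsub, hlen, hbk.trans hpre.sublist⟩⟩,
        by rw [hsens, hsens2, hs]⟩
    · intro p hp q hq heq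
      exact hhinj hp.1 hq.1 (hF2bij.injOn (hhmaps hp.1) (hhmaps hq.1) heq)
  refine ⟨le_min h1 h2, ?_⟩
  have hcover : G1 ⊆ F1 '' X ∪ B := by
    rintro q ⟨⟨hqL', hms⟩, hqs⟩
    obtain ⟨p, hpL, hpq⟩ := hF1bij.surjOn hqL'
    by_cases hbk : bk.Sublist p.trace
    · left
      refine ⟨p, ⟨hpL, hbk, ?_⟩, hpq⟩
      have hs := (hF1prop p hpL).2.2
      rw [hpq] at hs
      rw [← hs, hqs]
    · right
      exact ⟨⟨hqL', hms⟩, hqs, p, hpL, hpq, hbk⟩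
  have hle : G1.ncard ≤ X.ncard + B.ncard := by
    calc G1.ncard ≤ (F1 '' X ∪ B).ncard :=
          Set.ncard_le_ncard hcover ((hXfin.image _).union hBfin)
      _ ≤ (F1 '' X).ncard + B.ncard := Set.ncard_union_le _ _
      _ ≤ X.ncard + B.ncard := Nat.add_le_add_right (Set.ncard_image_le hXfin) _
  omega
end

section
/- (F-attack crack size, summed over groups.) Let F1 be an anonymization of a log L1 onto L1' and F2 an anonymization of a log L2 onto L2', both w.r.t. parameter n, let h be a continuation map from L1 to L2, and let bk be a list over A. For s ∈ S set g1'(s) = {q ∈ ms(L1', n, bk) | sens(q) = s} and g2'(s) = {q ∈ ms(L2', n, bk) | sens(q) = s}. Then the number of instances p ∈ L1 with bk ⊑ trace(p) is at most the sum, over the sensitive values s occurring in ms(L1', n, bk), of min(|g1'(s)|, |g2'(s)|). Consequently, at least Σ_s (|g1'(s)| − min(|g1'(s)|, |g2'(s)|)) instances of ms(L1', n, bk) are anonymizations of cases of L1 whose trace does not contain bk as a subsequence. -/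
variable {C A S : Type*}

/-- F-attack crack size, summed over groups: the number of cases of `L1` matching the
background knowledge `bk` is at most the sum over sensitive values `s` occurring in the
matching set of `L1'` of `min |g1'(s)| |g2'(s)|`; hence at least
`Σ_s (|g1'(s)| - min |g1'(s)| |g2'(s)|)` instances of `ms(L1', n, bk)` are
anonymizations of cases of `L1` whose trace does not contain `bk`. -/
theorem f_attack_crack_size_sum (n : ℕ)
    (F1 F2 h : Instance C A S → Instance C A S)
    (L1 L1' L2 L2' : Set (Instance C A S))
    (hL1 : IsLog L1) (hL1' : IsLog L1') (hL2 : IsLog L2) (hL2' : IsLog L2')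
    (hF1 : IsAnon n F1 L1 L1') (hF2 : IsAnon n F2 L2 L2')
    (hh : IsCont h L1 L2) (bk : List A)
    (hS : (Instance.sens '' ms L1' n bk).Finite) :
    ({p ∈ L1 | bk.Sublist p.trace}).ncard ≤
        (∑ s ∈ hS.toFinset,
          min ({q ∈ ms L1' n bk | q.sens = s}).ncard
            ({q ∈ ms L2' n bk | q.sens = s}).ncard) ∧
      (∑ s ∈ hS.toFinset,
          (({q ∈ ms L1' n bk | q.sens = s}).ncard -
            min ({q ∈ ms L1' n bk | q.sens = s}).ncard
              ({q ∈ ms L2' n bk | q.sens = s}).ncard)) ≤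
        ({q ∈ ms L1' n bk | ∃ p ∈ L1, F1 p = q ∧ ¬ bk.Sublist p.trace}).ncard := by
  classical
  obtain ⟨hF1b, hF1p⟩ := hF1
  obtain ⟨hF2b, hF2p⟩ := hF2
  obtain ⟨hhinj, hhmap, hhp⟩ := hh
  have hmsfin : (ms L1' n bk).Finite := hL1'.1.subset (fun q hq => hq.1)
  have hms2fin : (ms L2' n bk).Finite := hL2'.1.subset (fun q hq => hq.1)
  set AA : Set (Instance C A S) := {p ∈ L1 | bk.Sublist p.trace} with hAAdef
  have hAAfin : AA.Finite := hL1.1.subset (fun p hp => hp.1)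
  -- F1 maps AA into ms L1'
  have hF1ms : ∀ p ∈ AA, F1 p ∈ ms L1' n bk := by
    rintro p ⟨hp, hbk⟩
    exact ⟨hF1b.mapsTo hp, p.trace, (hF1p p hp).1, (hF1p p hp).2.1, hbk⟩
  -- F2 ∘ h maps AA into ms L2'
  have hF2ms : ∀ p ∈ AA, F2 (h p) ∈ ms L2' n bk := by
    rintro p ⟨hp, hbk⟩
    have hp2 : h p ∈ L2 := hhmap hp
    exact ⟨hF2b.mapsTo hp2, (h p).trace, (hF2p _ hp2).1, (hF2p _ hp2).2.1,
      hbk.trans (hhp p hp).1.sublist⟩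
  -- per-s groups
  set g1 : S → Set (Instance C A S) := fun s => {q ∈ ms L1' n bk | q.sens = s} with hg1def
  set g2 : S → Set (Instance C A S) := fun s => {q ∈ ms L2' n bk | q.sens = s} with hg2def
  have hg1fin : ∀ s, (g1 s).Finite := fun s => hmsfin.subset (fun q hq => hq.1)
  have hg2fin : ∀ s, (g2 s).Finite := fun s => hms2fin.subset (fun q hq => hq.1)
  set As : S → Set (Instance C A S) := fun s => {p ∈ AA | p.sens = s} with hAsdef
  have hAsfin : ∀ s, (As s).Finite := fun s => hAAfin.subset (fun p hp => hp.1)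
  have hAsle : ∀ s, (As s).ncard ≤ min ((g1 s).ncard) ((g2 s).ncard) := by
    intro s
    refine le_min ?_ ?_
    · refine Set.ncard_le_ncard_of_injOn F1 ?_ (hF1b.injOn.mono (fun p hp => hp.1.1)) (hg1fin s)
      rintro p ⟨hpA, hps⟩
      exact ⟨hF1ms p hpA, by rw [(hF1p p hpA.1).2.2, hps]⟩
    · refine Set.ncard_le_ncard_of_injOn (fun p => F2 (h p)) ?_ ?_ (hg2fin s)
      · rintro p ⟨hpA, hps⟩
        refine ⟨hF2ms p hpA, ?_⟩
        rw [(hF2p _ (hhmap hpA.1)).2.2, (hhp p hpA.1).2, hps]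
      · intro p hp q hq hpq
        exact hhinj hp.1.1 hq.1.1
          (hF2b.injOn (hhmap hp.1.1) (hhmap hq.1.1) hpq)
  -- sens of elements of AA lies in hS.toFinset
  have hsensA : ∀ p ∈ AA, p.sens ∈ hS.toFinset := by
    intro p hp
    rw [Set.Finite.mem_toFinset]
    exact ⟨F1 p, hF1ms p hp, (hF1p p hp.1).2.2⟩
  -- fiberwise decomposition of AA
  have hAcard : AA.ncard = ∑ s ∈ hS.toFinset,
      (hAAfin.toFinset.filter (fun p => p.sens = s)).card := by
    rw [Set.ncard_eq_toFinset_card _ hAAfin]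
    exact Finset.card_eq_sum_card_fiberwise
      (fun p hp => hsensA p (hAAfin.mem_toFinset.mp hp))
  have hfiltA : ∀ s, (hAAfin.toFinset.filter (fun p => p.sens = s)).card = (As s).ncard := by
    intro s
    rw [Set.ncard_eq_toFinset_card _ (hAsfin s)]
    congr 1
    ext p
    simp only [Finset.mem_filter, Set.Finite.mem_toFinset, hAsdef, Set.mem_setOf_eq]
  constructor
  · rw [hAcard]
    refine Finset.sum_le_sum (fun s _ => ?_)
    rw [hfiltA s]
    exact hAsle s
  · -- second part
    set bad : Set (Instance C A S) :=
      {q ∈ ms L1' n bk | ∃ p ∈ L1, F1 p = q ∧ ¬ bk.Sublist p.trace} with hbaddef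
    have hbadfin : bad.Finite := hmsfin.subset (fun q hq => hq.1)
    set bads : S → Set (Instance C A S) := fun s => {q ∈ bad | q.sens = s} with hbadsdef
    have hbadsfin : ∀ s, (bads s).Finite := fun s => hbadfin.subset (fun q hq => hq.1)
    have hcover : ∀ s, g1 s ⊆ (F1 '' As s) ∪ bads s := by
      rintro s q ⟨hqms, hqs⟩
      obtain ⟨p, hp, rfl⟩ := hF1b.surjOn hqms.1
      by_cases hbk : bk.Sublist p.trace
      · exact Or.inl ⟨p, ⟨⟨hp, hbk⟩, by rw [← (hF1p p hp).2.2, hqs]⟩, rfl⟩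
      · exact Or.inr ⟨⟨hqms, p, hp, rfl, hbk⟩, hqs⟩
    have hg1le : ∀ s, (g1 s).ncard ≤ (As s).ncard + (bads s).ncard := by
      intro s
      calc (g1 s).ncard ≤ ((F1 '' As s) ∪ bads s).ncard :=
            Set.ncard_le_ncard (hcover s) (((hAsfin s).image F1).union (hbadsfin s))
        _ ≤ (F1 '' As s).ncard + (bads s).ncard := Set.ncard_union_le _ _
        _ ≤ (As s).ncard + (bads s).ncard :=
            Nat.add_le_add_right (Set.ncard_image_le (hAsfin s)) _
    have hsub : ∀ s, (g1 s).ncard - min ((g1 s).ncard) ((g2 s).ncard) ≤ (bads s).ncard := by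
      intro s
      have := hg1le s
      have h2 := hAsle s
      omega
    have hbadcard : ∑ s ∈ hS.toFinset, (bads s).ncard = bad.ncard := by
      rw [Set.ncard_eq_toFinset_card _ hbadfin]
      rw [Finset.card_eq_sum_card_fiberwise (f := fun q => q.sens) (t := hS.toFinset)
        (fun q hq => by
          rw [Finset.mem_coe, Set.Finite.mem_toFinset]
          exact ⟨q, (hbadfin.mem_toFinset.mp hq).1, rfl⟩)]
      refine Finset.sum_congr rfl (fun s _ => ?_)
      rw [Set.ncard_eq_toFinset_card _ (hbadsfin s)]
      congr 1
      ext q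
      simp only [Finset.mem_filter, Set.Finite.mem_toFinset, hbadsdef, Set.mem_setOf_eq]
    calc ∑ s ∈ hS.toFinset, ((g1 s).ncard - min ((g1 s).ncard) ((g2 s).ncard))
        ≤ ∑ s ∈ hS.toFinset, (bads s).ncard := Finset.sum_le_sum (fun s _ => hsub s)
      _ = bad.ncard := hbadcard
end

section
/- (C-attack crack size, per group.) Let F1 be an anonymization of a log L1 onto L1' and F2 an anonymization of a log L2 onto L2', both w.r.t. parameter n, let h be a continuation map from L1 to L2, let bk be a list over A and s0 ∈ S, and set g1'(s0) = {q ∈ ms(L1', n, bk) | sens(q) = s0} and g2'(s0) = {q ∈ ms(L2', n, bk) | sens(q) = s0}. Then the number of instances q ∈ g2'(s0) for which there exists p ∈ L1 with F2(h(p)) = q and bk ⊑ trace(p) is at most min(|g1'(s0)|, |g2'(s0)|). Consequently, at least |g2'(s0)| − min(|g1'(s0)|, |g2'(s0)|) instances of g2'(s0) either are anonymizations of cases not in the image of h (i.e., cases that started after time t1) or are continuations of cases of L1 whose time-t1 trace does not contain bk as a subsequence. -/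
variable {C A S : Type*}

/-- C-attack crack size, per group: at most `min |g1'(s0)| |g2'(s0)|` instances of the
group `g2'(s0)` are anonymized continuations of cases of `L1` matching the background
knowledge `bk`; hence at least `|g2'(s0)| - min |g1'(s0)| |g2'(s0)|` instances of
`g2'(s0)` either are anonymizations of cases not continuing a case of `L1` (i.e., cases
started after time `t1`) or are continuations of cases of `L1` whose time-`t1` trace
does not contain `bk`. -/
theorem c_attack_crack_size (n : ℕ)
    (F1 F2 h : Instance C A S → Instance C A S)
    (L1 L1' L2 L2' : Set (Instance C A S))
    (hL1 : IsLog L1) (hL1' : IsLog L1') (hL2 : IsLog L2) (hL2' : IsLog L2')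
    (hF1 : IsAnon n F1 L1 L1') (hF2 : IsAnon n F2 L2 L2')
    (hh : IsCont h L1 L2) (bk : List A) (s0 : S) :
    ({q ∈ ms L2' n bk | q.sens = s0 ∧
          ∃ p ∈ L1, F2 (h p) = q ∧ bk.Sublist p.trace}).ncard ≤
        min ({q ∈ ms L1' n bk | q.sens = s0}).ncard
          ({q ∈ ms L2' n bk | q.sens = s0}).ncard ∧
      ({q ∈ ms L2' n bk | q.sens = s0}).ncard -
          min ({q ∈ ms L1' n bk | q.sens = s0}).ncard
            ({q ∈ ms L2' n bk | q.sens = s0}).ncard ≤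
        ({q ∈ ms L2' n bk | q.sens = s0 ∧
            ((∀ p ∈ L1, F2 (h p) ≠ q) ∨
              ∃ p ∈ L1, F2 (h p) = q ∧ ¬ bk.Sublist p.trace)}).ncard := by
  classical
  obtain ⟨hF1bij, hF1prop⟩ := hF1
  obtain ⟨hF2bij, hF2prop⟩ := hF2
  obtain ⟨hhinj, hhmaps, hhprop⟩ := hh
  set T := {q ∈ ms L2' n bk | q.sens = s0 ∧
      ∃ p ∈ L1, F2 (h p) = q ∧ bk.Sublist p.trace} with hTdef
  set G1 := {q ∈ ms L1' n bk | q.sens = s0} with hG1def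
  set G2 := {q ∈ ms L2' n bk | q.sens = s0} with hG2def
  have hG1fin : G1.Finite := hL1'.1.subset (fun q hq => hq.1.1)
  have hG2fin : G2.Finite := hL2'.1.subset (fun q hq => hq.1.1)
  have hTsub : T ⊆ G2 := fun q hq => ⟨hq.1, hq.2.1⟩
  have hTfin : T.Finite := hG2fin.subset hTsub
  have hw : ∀ q, q ∈ T → ∃ p, p ∈ L1 ∧ F2 (h p) = q ∧ bk.Sublist p.trace := by
    intro q hq
    obtain ⟨p, hp, h1, h2⟩ := hq.2.2
    exact ⟨p, hp, h1, h2⟩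
  choose w hwL hwq hwbk using hw
  have key1 : T.ncard ≤ G1.ncard := by
    apply Set.ncard_le_ncard_of_injOn
      (fun q => if hq : q ∈ T then F1 (w q hq) else q) (ht := hG1fin)
    · intro q hq
      simp only [dif_pos hq]
      obtain ⟨hsub, hlen, hsens⟩ := hF1prop (w q hq) (hwL q hq)
      refine ⟨⟨hF1bij.mapsTo (hwL q hq), w q hq |>.trace, hsub, hlen, hwbk q hq⟩, ?_⟩
      have h1 : (h (w q hq)).sens = (w q hq).sens := (hhprop _ (hwL q hq)).2
      have h2 : (F2 (h (w q hq))).sens = (h (w q hq)).sens :=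
        (hF2prop _ (hhmaps (hwL q hq))).2.2
      have h3 : q.sens = s0 := hq.2.1
      rw [hsens, ← h1, ← h2, hwq q hq, h3]
    · intro q1 hq1 q2 hq2 heq
      simp only [dif_pos hq1, dif_pos hq2] at heq
      have := hF1bij.injOn (hwL q1 hq1) (hwL q2 hq2) heq
      rw [← hwq q1 hq1, ← hwq q2 hq2, this]
  have key2 : T.ncard ≤ G2.ncard := Set.ncard_le_ncard hTsub hG2fin
  refine ⟨le_min key1 key2, ?_⟩
  set B := {q ∈ ms L2' n bk | q.sens = s0 ∧
      ((∀ p ∈ L1, F2 (h p) ≠ q) ∨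
        ∃ p ∈ L1, F2 (h p) = q ∧ ¬ bk.Sublist p.trace)} with hBdef
  have hdiff : G2 \ T ⊆ B := by
    intro q hq
    obtain ⟨⟨hms, hsens⟩, hnT⟩ := hq
    refine ⟨hms, hsens, ?_⟩
    by_cases hex : ∃ p ∈ L1, F2 (h p) = q
    · obtain ⟨p, hp, hpq⟩ := hex
      refine Or.inr ⟨p, hp, hpq, fun hbk => hnT ⟨hms, hsens, p, hp, hpq, hbk⟩⟩
    · push_neg at hex
      exact Or.inl hex
  have hBfin : B.Finite := hL2'.1.subset (fun q hq => hq.1.1)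
  calc G2.ncard - min G1.ncard G2.ncard ≤ G2.ncard - T.ncard := by
        exact Nat.sub_le_sub_left (le_min key1 key2) _
    _ = (G2 \ T).ncard := (Set.ncard_diff hTsub hTfin).symm
    _ ≤ B.ncard := Set.ncard_le_ncard hdiff hBfin
end

section
/- Let F1 be an anonymization of a log L1 onto L1' and F2 an anonymization of a log L2 onto L2', both w.r.t. parameter n, let h be a continuation map from L1 to L2, and let g2' be any subset of L2'. Define G1' = {q1 ∈ L1' | ∃ q2 ∈ g2', q1 ∼ q2} and G2' = {q2 ∈ L2' | ∃ q1 ∈ G1', q1 ∼ q2}. Then the map q ↦ F2(h(F1⁻¹(q))) is injective and maps G1' into G2'. -/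
variable {C A S : Type*}

/-- For `G1' = {q1 ∈ L1' | ∃ q2 ∈ g2', q1 ∼ q2}` and
`G2' = {q2 ∈ L2' | ∃ q1 ∈ G1', q1 ∼ q2}`, the map `q ↦ F2 (h (F1⁻¹ q))` is injective
on `G1'` and maps `G1'` into `G2'`. Here `F1inv` is the inverse of the bijection `F1`
on `L1'`. -/
theorem buddy_map_injective_into (n : ℕ)
    (F1 F2 h F1inv : Instance C A S → Instance C A S)
    (L1 L1' L2 L2' : Set (Instance C A S))
    (hL1 : IsLog L1) (hL1' : IsLog L1') (hL2 : IsLog L2) (hL2' : IsLog L2')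
    (hF1 : IsAnon n F1 L1 L1') (hF2 : IsAnon n F2 L2 L2')
    (hh : IsCont h L1 L2)
    (hinv : ∀ q ∈ L1', F1inv q ∈ L1 ∧ F1 (F1inv q) = q)
    (g2' : Set (Instance C A S)) (hg2' : g2' ⊆ L2') :
    Set.InjOn (fun q => F2 (h (F1inv q)))
        {q1 ∈ L1' | ∃ q2 ∈ g2', Comparable n q1 q2} ∧
      Set.MapsTo (fun q => F2 (h (F1inv q)))
        {q1 ∈ L1' | ∃ q2 ∈ g2', Comparable n q1 q2}
        {q2 ∈ L2' | ∃ q1 ∈ {q1 ∈ L1' | ∃ q2 ∈ g2', Comparable n q1 q2},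
          Comparable n q1 q2} := by
  obtain ⟨hF1bij, hF1prop⟩ := hF1
  obtain ⟨hF2bij, hF2prop⟩ := hF2
  obtain ⟨hhinj, hhmaps, hhprop⟩ := hh
  constructor
  · intro x hx y hy hxy
    simp only at hxy
    have hx' := hinv x hx.1
    have hy' := hinv y hy.1
    have h1 : h (F1inv x) = h (F1inv y) :=
      hF2bij.2.1 (hhmaps hx'.1) (hhmaps hy'.1) hxy
    have h2 : F1inv x = F1inv y := hhinj hx'.1 hy'.1 h1
    rw [← hx'.2, ← hy'.2, h2]
  · rintro q ⟨hqL, q2, hq2, _⟩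
    obtain ⟨hpL1, hFp⟩ := hinv q hqL
    set p := F1inv q
    have hhp : h p ∈ L2 := hhmaps hpL1
    have hr : F2 (h p) ∈ L2' := hF2bij.1 hhp
    obtain ⟨hsub1, hlen1, hsens1⟩ := hF1prop p hpL1
    rw [hFp] at hsub1 hlen1 hsens1
    obtain ⟨hpre, hsens2⟩ := hhprop p hpL1
    obtain ⟨hsub2, hlen2, hsens3⟩ := hF2prop (h p) hhp
    refine ⟨hr, q, ⟨hqL, q2, hq2, ‹_›⟩, ?_, p.trace, (h p).trace,
      hsub1, hlen1, hsub2, hlen2, hpre⟩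
    rw [hsens3, hsens2, hsens1]
end

section
/- (B-attack crack size.) Let F1 be an anonymization of a log L1 onto L1' and F2 an anonymization of a log L2 onto L2', both w.r.t. parameter n, let h be a continuation map from L1 to L2, let bk be a list over A, and let g2' be a subset of the matching set ms(L2', n, bk) all of whose members have the same sensitive value (a group). Define G1' = {q1 ∈ L1' | ∃ q2 ∈ g2', q1 ∼ q2} and G2' = {q2 ∈ L2' | ∃ q1 ∈ G1', q1 ∼ q2}, and assume g2' ⊆ G2'. Then the number of instances q ∈ g2' of the form q = F2(h(p)) for some p ∈ L1 (i.e., anonymizations of continuations of cases already present at time t1) is at least |G1'| − (|G2'| − |g2'|). Consequently, for a victim case known to have started after time t1, at least |G1'| − (|G2'| − |g2'|) instances of g2' can be excluded from the set of candidates. -/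
variable {C A S : Type*}

/-- B-attack crack size: for a group `g2'` of the matching set of `L2'` (all members
sharing the sensitive value `s0`), with `G1' = {q1 ∈ L1' | ∃ q2 ∈ g2', q1 ∼ q2}` and
`G2' = {q2 ∈ L2' | ∃ q1 ∈ G1', q1 ∼ q2}` and `g2' ⊆ G2'`, at least
`|G1'| - (|G2'| - |g2'|)` instances of `g2'` are anonymizations of continuations of
cases already present at time `t1`, i.e., of the form `F2 (h p)` with `p ∈ L1`. -/
theorem b_attack_crack_size (n : ℕ)
    (F1 F2 h : Instance C A S → Instance C A S)
    (L1 L1' L2 L2' : Set (Instance C A S))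
    (hL1 : IsLog L1) (hL1' : IsLog L1') (hL2 : IsLog L2) (hL2' : IsLog L2')
    (hF1 : IsAnon n F1 L1 L1') (hF2 : IsAnon n F2 L2 L2')
    (hh : IsCont h L1 L2) (bk : List A) (s0 : S)
    (g2' : Set (Instance C A S))
    (hg2ms : g2' ⊆ ms L2' n bk) (hg2s : ∀ q ∈ g2', q.sens = s0)
    (hg2G2 : g2' ⊆ {q2 ∈ L2' | ∃ q1 ∈ {q1 ∈ L1' | ∃ q2 ∈ g2', Comparable n q1 q2},
      Comparable n q1 q2}) :
    ({q1 ∈ L1' | ∃ q2 ∈ g2', Comparable n q1 q2}).ncard -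
        (({q2 ∈ L2' | ∃ q1 ∈ {q1 ∈ L1' | ∃ q2 ∈ g2', Comparable n q1 q2},
            Comparable n q1 q2}).ncard - g2'.ncard) ≤
      ({q ∈ g2' | ∃ p ∈ L1, F2 (h p) = q}).ncard := by
  classical
  set G1 : Set (Instance C A S) := {q1 ∈ L1' | ∃ q2 ∈ g2', Comparable n q1 q2} with hG1def
  set G2 : Set (Instance C A S) := {q2 ∈ L2' | ∃ q1 ∈ G1, Comparable n q1 q2} with hG2def
  set K : Set (Instance C A S) := {q ∈ g2' | ∃ p ∈ L1, F2 (h p) = q} with hKdef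
  have hG2sub : G2 ⊆ L2' := fun q hq => hq.1
  have hg2L2' : g2' ⊆ L2' := fun q hq => (hg2ms hq).1
  have hG2fin : G2.Finite := hL2'.1.subset hG2sub
  have hKfin : K.Finite := hL2'.1.subset (fun q hq => hg2L2' hq.1)
  rcases eq_or_ne G1 ∅ with hemp | hne
  · simp [hemp]
  obtain ⟨q0, hq0⟩ := Set.nonempty_iff_ne_empty.mpr hne
  haveI : Nonempty (Instance C A S) := ⟨q0⟩
  set f : Instance C A S → Instance C A S :=
    fun q => F2 (h (Function.invFunOn F1 L1 q)) with hfdef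
  have himg : ∀ q1 ∈ G1, q1 ∈ F1 '' L1 := by
    intro q1 hq1
    rw [hF1.1.image_eq]; exact hq1.1
  have hinv : ∀ q1 ∈ G1, Function.invFunOn F1 L1 q1 ∈ L1 ∧
      F1 (Function.invFunOn F1 L1 q1) = q1 := by
    intro q1 hq1
    exact ⟨Function.invFunOn_mem (himg q1 hq1), Function.invFunOn_eq (himg q1 hq1)⟩
  have hmaps : ∀ q1 ∈ G1, f q1 ∈ (G2 \ g2') ∪ K := by
    intro q1 hq1
    obtain ⟨hpL1, hpeq⟩ := hinv q1 hq1
    set p := Function.invFunOn F1 L1 q1 with hpdef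
    have hhp : h p ∈ L2 := hh.2.1 hpL1
    have hfq : f q1 = F2 (h p) := rfl
    have hF2p := hF2.2 (h p) hhp
    have hF1p := hF1.2 p hpL1
    have hhpp := hh.2.2 p hpL1
    have hmemL2' : F2 (h p) ∈ L2' := hF2.1.mapsTo hhp
    have hcomp : Comparable n q1 (F2 (h p)) := by
      refine ⟨?_, p.trace, (h p).trace, ?_, ?_, hF2p.1, hF2p.2.1, hhpp.1⟩
      · rw [hF2p.2.2, hhpp.2, ← hF1p.2.2, hpeq]
      · rw [← hpeq]; exact hF1p.1
      · rw [← hpeq]; exact hF1p.2.1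
    have hG2mem : f q1 ∈ G2 := by
      rw [hfq]
      exact ⟨hmemL2', q1, hq1, hcomp⟩
    by_cases hc : f q1 ∈ g2'
    · exact Or.inr ⟨hc, p, hpL1, rfl⟩
    · exact Or.inl ⟨hG2mem, hc⟩
  have hinj : Set.InjOn f G1 := by
    intro q1 hq1 q1' hq1' heq
    obtain ⟨hpL1, hpeq⟩ := hinv q1 hq1
    obtain ⟨hpL1', hpeq'⟩ := hinv q1' hq1'
    have h1 : h (Function.invFunOn F1 L1 q1) = h (Function.invFunOn F1 L1 q1') :=
      hF2.1.injOn (hh.2.1 hpL1) (hh.2.1 hpL1') heq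
    have h2 : Function.invFunOn F1 L1 q1 = Function.invFunOn F1 L1 q1' :=
      hh.1 hpL1 hpL1' h1
    rw [← hpeq, ← hpeq', h2]
  have hle : G1.ncard ≤ ((G2 \ g2') ∪ K).ncard :=
    Set.ncard_le_ncard_of_injOn f hmaps hinj ((hG2fin.diff (t := g2')).union hKfin)
  have hle2 : ((G2 \ g2') ∪ K).ncard ≤ (G2 \ g2').ncard + K.ncard :=
    Set.ncard_union_le _ _
  have hdiff : (G2 \ g2').ncard = G2.ncard - g2'.ncard :=
    Set.ncard_diff hg2G2 (hG2fin.subset hg2G2)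
  have hg2le : g2'.ncard ≤ G2.ncard := Set.ncard_le_ncard hg2G2 hG2fin
  omega
end
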